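/- Let $P_X$ be a probability mass function on a finite set $\mathcal{X}$, let $k\ge 1$, let $P_{X^k}(x^k)=\prod_{i=1}^k P_X(x_i)$ on $\mathcal{X}^k$, let $D\ge 2$ be an integer, and let $c\colon\mathcal{X}^k\to\{0,\ldots,D-1\}^*$ be a uniquely decodable code with codeword lengths $\ell(x^k)=|c(x^k)|$. Then, for every $\rho>0$, $\;\frac{\Lambda_k(\rho)}{\rho}\;\ge\;\frac{1}{\log D}\,H_{\frac{1}{1+\rho}}(X)$, where $\Lambda_k(\rho)=\frac1k\log_D\Bigl(\sum_{x^k\in\mathcal{X}^k}P_{X^k}(x^k)\,D^{\rho\,\ell(x^k)}\Bigr)$. -/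

import Mathlib

open scoped BigOperators

/-- A fixed-to-variable code `c` on blocks, with codewords that are finite strings over a
`D`-ary alphabet, is *uniquely decodable* if concatenation of codewords is injective on
finite sequences of source blocks. -/
def UniquelyDecodable {A : Type*} {D : ℕ} (c : A → List (Fin D)) : Prop :=
  Function.Injective fun u : List A => (u.map c).flatten

private lemma card_fiber_le {A : Type*} [Fintype A] {D : ℕ}
    (c : A → List (Fin D)) (hc : UniquelyDecodable c) (r m : ℕ) :
    Fintype.card {v : Fin r → A // ∑ i, (c (v i)).length = m} ≤ D ^ m := by
  classical
  have hcard : Fintype.card (List.Vector (Fin D) m) = D ^ m := by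
    rw [card_vector, Fintype.card_fin]
  rw [← hcard]
  refine Fintype.card_le_of_injective
    (fun p => ⟨((List.ofFn p.1).map c).flatten, ?_⟩) ?_
  · rw [List.length_flatten, List.map_map, List.map_ofFn, List.sum_ofFn]
    exact p.2
  · rintro ⟨v, hv⟩ ⟨w, hw⟩ h
    have h' : (fun u : List A => (u.map c).flatten) (List.ofFn v)
        = (fun u : List A => (u.map c).flatten) (List.ofFn w) :=
      congrArg Subtype.val h
    exact Subtype.ext (List.ofFn_injective (hc h'))

private lemma kraft_ud {A : Type*} [Fintype A] {D : ℕ} (hD : 2 ≤ D)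
    (c : A → List (Fin D)) (hc : UniquelyDecodable c) :
    ∑ v, ((D : ℝ) ^ (c v).length)⁻¹ ≤ 1 := by
  classical
  have hD0 : (0:ℝ) < D := by positivity
  by_cases hA : IsEmpty A
  · simp
  rw [not_isEmpty_iff] at hA
  set L : ℕ := Finset.univ.sup (fun v : A => (c v).length) with hLdef
  set Q : ℝ := ∑ v, ((D : ℝ) ^ (c v).length)⁻¹ with hQdef
  have hQbound : ∀ r : ℕ, Q ^ r ≤ (r : ℝ) * L + 1 := by
    intro r
    have hT : ∀ p : Fin r → A, (∑ i, (c (p i)).length) ≤ r * L := by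
      intro p
      calc ∑ i, (c (p i)).length ≤ ∑ _i : Fin r, L :=
            Finset.sum_le_sum fun i _ =>
              Finset.le_sup (f := fun v : A => (c v).length) (Finset.mem_univ (p i))
        _ = r * L := by simp [Finset.sum_const, mul_comm]
    have expand : Q ^ r = ∑ p : Fin r → A, ((D : ℝ) ^ (∑ i, (c (p i)).length))⁻¹ := by
      rw [hQdef, Fintype.sum_pow]
      refine Finset.sum_congr rfl fun p _ => ?_
      rw [← Finset.prod_pow_eq_pow_sum, ← Finset.prod_inv_distrib]
    rw [expand]
    have fib : ∑ p : Fin r → A, ((D : ℝ) ^ (∑ i, (c (p i)).length))⁻¹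
        = ∑ m ∈ Finset.range (r * L + 1),
            ∑ p ∈ Finset.univ.filter (fun p : Fin r → A => (∑ i, (c (p i)).length) = m),
              ((D : ℝ) ^ (∑ i, (c (p i)).length))⁻¹ :=
      (Finset.sum_fiberwise_of_maps_to
        (fun p _ => Finset.mem_range.2 (Nat.lt_succ_of_le (hT p))) _).symm
    rw [fib]
    have hle1 : ∀ m ∈ Finset.range (r * L + 1),
        (∑ p ∈ Finset.univ.filter (fun p : Fin r → A => (∑ i, (c (p i)).length) = m),
          ((D : ℝ) ^ (∑ i, (c (p i)).length))⁻¹) ≤ 1 := by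
      intro m _
      have heq : ∀ p ∈ Finset.univ.filter (fun p : Fin r → A => (∑ i, (c (p i)).length) = m),
          ((D : ℝ) ^ (∑ i, (c (p i)).length))⁻¹ = ((D : ℝ) ^ m)⁻¹ := by
        intro p hp
        rw [(Finset.mem_filter.1 hp).2]
      rw [Finset.sum_congr rfl heq, Finset.sum_const, nsmul_eq_mul]
      have hcard : (Finset.univ.filter
          (fun p : Fin r → A => (∑ i, (c (p i)).length) = m)).card ≤ D ^ m := by
        rw [← Fintype.card_subtype]
        exact card_fiber_le c hc r m
      calc ((Finset.univ.filter
            (fun p : Fin r → A => (∑ i, (c (p i)).length) = m)).card : ℝ)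
              * ((D : ℝ) ^ m)⁻¹
          ≤ ((D : ℝ) ^ m) * ((D : ℝ) ^ m)⁻¹ := by
            apply mul_le_mul_of_nonneg_right _ (by positivity)
            exact_mod_cast hcard
        _ = 1 := by field_simp
    calc (∑ m ∈ Finset.range (r * L + 1),
          ∑ p ∈ Finset.univ.filter (fun p : Fin r → A => (∑ i, (c (p i)).length) = m),
            ((D : ℝ) ^ (∑ i, (c (p i)).length))⁻¹)
        ≤ ∑ _m ∈ Finset.range (r * L + 1), (1:ℝ) := Finset.sum_le_sum hle1
      _ = ((r * L + 1 : ℕ) : ℝ) := by simp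
      _ = (r : ℝ) * L + 1 := by push_cast; ring
  by_contra hQ1
  push_neg at hQ1
  set ε : ℝ := Q - 1 with hεdef
  have hε : 0 < ε := by rw [hεdef]; linarith
  obtain ⟨n, hn⟩ := exists_nat_gt ((2 * (L:ℝ) + 1) / ε ^ 2)
  have hn0 : (0:ℝ) < n := lt_of_le_of_lt (by positivity) hn
  have hn1 : (1:ℝ) ≤ n := by exact_mod_cast Nat.one_le_iff_ne_zero.2 (by exact_mod_cast hn0.ne')
  have hnε : (2 * (L:ℝ) + 1) < n * ε ^ 2 := by
    rw [div_lt_iff₀ (by positivity)] at hn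
    linarith [hn]
  have hbern : 1 + (n : ℝ) * ε ≤ Q ^ n := by
    have h := one_add_mul_le_pow (a := ε) (by linarith) n
    have hQe : 1 + ε = Q := by rw [hεdef]; ring
    rw [hQe] at h
    linarith [h]
  have hbound := hQbound (n * 2)
  rw [pow_mul] at hbound
  have hcast : ((n * 2 : ℕ) : ℝ) = 2 * n := by push_cast; ring
  rw [hcast] at hbound
  have hQn0 : 0 ≤ 1 + (n:ℝ) * ε := by positivity
  nlinarith [mul_le_mul hbern hbern hQn0 (le_trans hQn0 hbern),
    mul_le_mul_of_nonneg_left hnε.le (le_of_lt hn0),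
    sq_nonneg ((n:ℝ) * ε)]

/-- **Campbell's converse coding theorem.**  For a discrete memoryless source with
per-symbol pmf `P` on a finite alphabet and any uniquely decodable `D`-ary code on
source blocks of length `k` with codeword lengths `ℓ`, the scaled cumulant generating
function `Λ_k(ρ) = (1/k) log_D ∑ P_{X^k}(x^k) D^{ρ ℓ(x^k)}` satisfies, for every `ρ > 0`,
`Λ_k(ρ)/ρ ≥ H_{1/(1+ρ)}(X) / log D`, where `H_α(X) = (1/(1-α)) log ∑ P(x)^α` is the
Rényi entropy. -/
theorem campbell_converse
    {𝒳 : Type*} [Fintype 𝒳]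
    (P : 𝒳 → ℝ) (hP : ∀ x, 0 ≤ P x) (hPsum : ∑ x, P x = 1)
    (k : ℕ) (hk : 1 ≤ k) (D : ℕ) (hD : 2 ≤ D)
    (c : (Fin k → 𝒳) → List (Fin D)) (hc : UniquelyDecodable c)
    (ℓ : (Fin k → 𝒳) → ℕ) (hℓ : ∀ xk, ℓ xk = (c xk).length)
    (ρ : ℝ) (hρ : 0 < ρ) :
    ((1 / (k : ℝ)) * Real.logb D
        (∑ xk : Fin k → 𝒳, (∏ i, P (xk i)) * (D : ℝ) ^ (ρ * (ℓ xk : ℝ)))) / ρ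
      ≥ (1 / Real.log D) *
          ((1 - 1 / (1 + ρ))⁻¹ * Real.log (∑ x, P x ^ (1 / (1 + ρ)))) := by
  classical
  have h𝒳 : Nonempty 𝒳 := by
    by_contra h
    rw [not_nonempty_iff] at h
    simp [Finset.univ_eq_empty] at hPsum
  have hD0 : (0:ℝ) < D := by positivity
  have hD1 : (1:ℝ) < D := by exact_mod_cast lt_of_lt_of_le one_lt_two (by exact_mod_cast hD)
  have hlogD : 0 < Real.log D := Real.log_pos hD1
  have h1ρ : (0:ℝ) < 1 + ρ := by linarith
  have hk0 : (0:ℝ) < k := by exact_mod_cast hk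
  set α : ℝ := 1 / (1 + ρ) with hαdef
  have hα0 : 0 < α := by positivity
  have hα1 : α < 1 := by
    rw [hαdef, div_lt_one h1ρ]; linarith
  have hρα : ρ * α = 1 - α := by
    rw [hαdef]; field_simp; ring
  have hP1 : ∀ x, P x ≤ 1 := by
    intro x
    rw [← hPsum]
    exact Finset.single_le_sum (fun y _ => hP y) (Finset.mem_univ x)
  -- block distribution and the main quantities
  set p : (Fin k → 𝒳) → ℝ := fun v => ∏ i, P (v i) with hpdef
  have hp0 : ∀ v, 0 ≤ p v := fun v => Finset.prod_nonneg fun i _ => hP _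
  have hp1 : ∀ v, p v ≤ 1 := fun v =>
    Finset.prod_le_one (fun i _ => hP _) (fun i _ => hP1 _)
  have hpsum : ∑ v, p v = 1 := by
    have h1 : (∑ x, P x) ^ k = ∑ v : Fin k → 𝒳, ∏ i, P (v i) := Fintype.sum_pow P k
    have h2 : ∑ v, p v = (∑ x, P x) ^ k := h1.symm
    rw [h2, hPsum, one_pow]
  set a : (Fin k → 𝒳) → ℝ := fun v => p v * (D : ℝ) ^ (ρ * (ℓ v : ℝ)) with hadef
  set b : (Fin k → 𝒳) → ℝ := fun v => (D : ℝ) ^ (-(ℓ v : ℝ)) with hbdef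
  have ha0 : ∀ v, 0 ≤ a v := fun v => mul_nonneg (hp0 v) (Real.rpow_nonneg hD0.le _)
  have hb0 : ∀ v, 0 < b v := fun v => Real.rpow_pos_of_pos hD0 _
  set A : ℝ := ∑ v, a v with hAdef
  set B : ℝ := ∑ v, b v with hBdef
  have hA1 : 1 ≤ A := by
    rw [hAdef, ← hpsum]
    refine Finset.sum_le_sum fun v _ => ?_
    have h1 : (1:ℝ) ≤ (D : ℝ) ^ (ρ * (ℓ v : ℝ)) :=
      Real.one_le_rpow hD1.le (by positivity)
    show p v ≤ p v * (D : ℝ) ^ (ρ * (ℓ v : ℝ))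
    calc p v = p v * 1 := (mul_one _).symm
      _ ≤ p v * (D : ℝ) ^ (ρ * (ℓ v : ℝ)) := mul_le_mul_of_nonneg_left h1 (hp0 v)
  have hA0 : 0 < A := lt_of_lt_of_le one_pos hA1
  have hB0 : 0 < B := Finset.sum_pos (fun v _ => hb0 v) Finset.univ_nonempty
  have hB1 : B ≤ 1 := by
    have hBeq : B = ∑ v : Fin k → 𝒳, ((D : ℝ) ^ (c v).length)⁻¹ := by
      rw [hBdef]
      refine Finset.sum_congr rfl fun v _ => ?_
      show (D : ℝ) ^ (-(ℓ v : ℝ)) = _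
      rw [Real.rpow_neg hD0.le, Real.rpow_natCast, hℓ]
    rw [hBeq]
    exact kraft_ud hD c hc
  -- pointwise Hölder decomposition
  have hpoint : ∀ v, p v ^ α = a v ^ α * b v ^ (1 - α) := by
    intro v
    have e1 : a v ^ α = p v ^ α * (D : ℝ) ^ (ρ * (ℓ v : ℝ) * α) := by
      show (p v * (D : ℝ) ^ (ρ * (ℓ v : ℝ))) ^ α = _
      rw [Real.mul_rpow (hp0 v) (Real.rpow_nonneg hD0.le _), ← Real.rpow_mul hD0.le]
    have e2 : b v ^ (1 - α) = (D : ℝ) ^ (-(ℓ v : ℝ) * (1 - α)) := by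
      show ((D : ℝ) ^ (-(ℓ v : ℝ))) ^ (1 - α) = _
      rw [← Real.rpow_mul hD0.le]
    rw [e1, e2, mul_assoc, ← Real.rpow_add hD0]
    have hz : ρ * (ℓ v : ℝ) * α + -(ℓ v : ℝ) * (1 - α) = 0 := by
      linear_combination (ℓ v : ℝ) * hρα
    rw [hz, Real.rpow_zero, mul_one]
  -- Hölder's inequality
  have holder : ∑ v, p v ^ α ≤ A ^ α * B ^ (1 - α) := by
    have hAB0 : 0 < A ^ α * B ^ (1 - α) := by
      apply mul_pos (Real.rpow_pos_of_pos hA0 _) (Real.rpow_pos_of_pos hB0 _)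
    have key : ∀ v, (a v / A) ^ α * (b v / B) ^ (1 - α)
        ≤ α * (a v / A) + (1 - α) * (b v / B) := fun v =>
      Real.geom_mean_le_arith_mean2_weighted hα0.le (by linarith)
        (div_nonneg (ha0 v) hA0.le) (div_nonneg (hb0 v).le hB0.le) (by ring)
    have sum_le : ∑ v, (a v / A) ^ α * (b v / B) ^ (1 - α) ≤ 1 := by
      calc ∑ v, (a v / A) ^ α * (b v / B) ^ (1 - α)
          ≤ ∑ v, (α * (a v / A) + (1 - α) * (b v / B)) :=
            Finset.sum_le_sum fun v _ => key v
        _ = α * (A / A) + (1 - α) * (B / B) := by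
            rw [Finset.sum_add_distrib, ← Finset.mul_sum, ← Finset.mul_sum,
              ← Finset.sum_div, ← Finset.sum_div]
        _ = 1 := by
            rw [div_self hA0.ne', div_self hB0.ne']; ring
    have expand : ∀ v, (a v / A) ^ α * (b v / B) ^ (1 - α)
        = (a v ^ α * b v ^ (1 - α)) / (A ^ α * B ^ (1 - α)) := by
      intro v
      rw [Real.div_rpow (ha0 v) hA0.le, Real.div_rpow (hb0 v).le hB0.le,
        div_mul_div_comm]
    calc ∑ v, p v ^ α = ∑ v, a v ^ α * b v ^ (1 - α) :=
          Finset.sum_congr rfl fun v _ => hpoint v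
      _ = (A ^ α * B ^ (1 - α)) * ∑ v, (a v / A) ^ α * (b v / B) ^ (1 - α) := by
          rw [Finset.mul_sum]
          refine Finset.sum_congr rfl fun v _ => ?_
          rw [expand v, mul_div_cancel₀ _ hAB0.ne']
      _ ≤ (A ^ α * B ^ (1 - α)) * 1 := by
          exact mul_le_mul_of_nonneg_left sum_le hAB0.le
      _ = A ^ α * B ^ (1 - α) := by ring
  have hSkA : ∑ v, p v ^ α ≤ A ^ α := by
    have hBle : B ^ (1 - α) ≤ 1 := Real.rpow_le_one hB0.le hB1 (by linarith)
    calc ∑ v, p v ^ α ≤ A ^ α * B ^ (1 - α) := holder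
      _ ≤ A ^ α * 1 := mul_le_mul_of_nonneg_left hBle (Real.rpow_nonneg hA0.le _)
      _ = A ^ α := by ring
  -- lower bound for the block Rényi sum
  have hSk1 : (1:ℝ) ≤ ∑ v, p v ^ α := by
    rw [← hpsum]
    refine Finset.sum_le_sum fun v _ => ?_
    rcases eq_or_lt_of_le (hp0 v) with h | h
    · rw [← h, Real.zero_rpow hα0.ne']
    · calc p v = p v ^ (1:ℝ) := (Real.rpow_one _).symm
        _ ≤ p v ^ α := Real.rpow_le_rpow_of_exponent_ge h (hp1 v) hα1.le
  have hSk0 : (0:ℝ) < ∑ v, p v ^ α := lt_of_lt_of_le one_pos hSk1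
  -- tensorization
  have hSk : ∑ v, p v ^ α = (∑ x, P x ^ α) ^ k := by
    rw [Fintype.sum_pow]
    refine Finset.sum_congr rfl fun v _ => ?_
    show (∏ i, P (v i)) ^ α = ∏ i, P (v i) ^ α
    exact (Real.finset_prod_rpow _ _ (fun i _ => hP _) α).symm
  -- take logs
  have hlogA : (1 + ρ) * ((k : ℝ) * Real.log (∑ x, P x ^ α)) ≤ Real.log A := by
    have h1 : Real.log (∑ v, p v ^ α) ≤ α * Real.log A := by
      calc Real.log (∑ v, p v ^ α) ≤ Real.log (A ^ α) := Real.log_le_log hSk0 hSkA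
        _ = α * Real.log A := Real.log_rpow hA0 α
    have h2 : Real.log (∑ v, p v ^ α) = (k : ℝ) * Real.log (∑ x, P x ^ α) := by
      rw [hSk, Real.log_pow]
    have hαinv : (1 + ρ) * α = 1 := by
      rw [hαdef]; field_simp
    have h3 : (1 + ρ) * (α * Real.log A) = Real.log A := by
      rw [← mul_assoc, hαinv, one_mul]
    have h4 := mul_le_mul_of_nonneg_left h1 h1ρ.le
    rw [h2] at h4
    linarith [h3, h4]
  -- the sum in the statement is A
  rw [ge_iff_le, Real.logb]
  have e1 : (1 - α)⁻¹ = (1 + ρ) / ρ := by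
    rw [hαdef]
    rw [show 1 - 1 / (1 + ρ) = ρ / (1 + ρ) by field_simp; ring, inv_div]
  rw [e1]
  set S : ℝ := ∑ x, P x ^ α with hSdef
  have hne1 : Real.log (D:ℝ) ≠ 0 := hlogD.ne'
  have hne2 : (k:ℝ) ≠ 0 := hk0.ne'
  have hne3 : ρ ≠ 0 := hρ.ne'
  have lhs_eq : (1 / Real.log D) * ((1 + ρ) / ρ * Real.log S)
      = ((1 + ρ) * ((k : ℝ) * Real.log S)) / ((k : ℝ) * ρ * Real.log D) := by
    field_simp
  have rhs_eq : (1 / (k : ℝ)) * (Real.log A / Real.log D) / ρ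
      = Real.log A / ((k : ℝ) * ρ * Real.log D) := by
    field_simp
  rw [lhs_eq, rhs_eq]
  have hden : (0:ℝ) < (k : ℝ) * ρ * Real.log D := by positivity
  gcongr
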